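/- Fix t ≥ 0 and suppose V_t satisfies: (ii) for all S, all Q1 ≤ Q2 ≤ B and W1 ≤ W2 ≤ M, V_t(S,Q2,W1) − V_t(S,Q1,W1) ≥ V_t(S,Q2,W2) − V_t(S,Q1,W2); and (iii) for all S, 0 ≤ V'_t(S,Q,0) for Q < B and V'_t(S,Q,0) ≤ V'_t(S,Q+1,M) for Q+2 ≤ B. Then w_t is submodular in (Q,a): for all S, all a ≤ b in {0,…,M}, and all Q < B, w_t(S,Q+1,b) − w_t(S,Q,b) ≤ w_t(S,Q+1,a) − w_t(S,Q,a). -/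

import Mathlib

open Finset Filter Topology

/-- Parameters of the multi-server sleeping MDP with MMPP arrivals. -/
structure MDPParams where
  /-- number of MMPP phases -/
  N : ℕ
  /-- number of servers -/
  M : ℕ
  /-- buffer size -/
  B : ℕ
  /-- arrival rates per phase -/
  lam : ℕ → ℝ
  /-- phase transition rates -/
  sig : ℕ → ℕ → ℝ
  /-- service rate -/
  mu : ℝ
  /-- slot length -/
  Δ : ℝ
  /-- discount factor -/
  r : ℝ
  /-- delay weight -/
  ω : ℝ
  /-- per-slot active energy -/
  Eon : ℝ
  /-- switching energy -/
  Esw : ℝ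

/-- Switching cost `s(W,a) = max(a−W,0)·E_sw`. -/
noncomputable def sCost (p : MDPParams) (W a : ℕ) : ℝ := ((a - W : ℕ) : ℝ) * p.Esw

/-- One-step cost-plus-continuation `w` built from a value function `V`. -/
noncomputable def wStep (p : MDPParams) (V : ℕ → ℕ → ℕ → ℝ) (S Q a : ℕ) : ℝ :=
  p.ω * Q + a * p.Eon + p.r *
    ((∑ S' ∈ (Finset.Icc 1 p.N).erase S, p.sig S S' * p.Δ * V S' Q a)
      + p.lam S * p.Δ * (if Q < p.B then (1 : ℝ) else 0) * V S (Q + 1) a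
      + (a : ℝ) * p.mu * p.Δ * (if 0 < Q then (1 : ℝ) else 0) * V S (Q - 1) a
      + (1 - (a : ℝ) * p.mu * p.Δ * (if 0 < Q then (1 : ℝ) else 0)
          - p.lam S * p.Δ * (if Q < p.B then (1 : ℝ) else 0)
          - (∑ S' ∈ (Finset.Icc 1 p.N).erase S, p.sig S S') * p.Δ) * V S Q a)

/-- Finite-horizon value iteration: `V_0 ≡ 0`,
`V_{t+1}(S,Q,W) = min_{a ∈ {0,…,M}} (s(W,a) + w_t(S,Q,a))`. -/
noncomputable def Vit (p : MDPParams) : ℕ → ℕ → ℕ → ℕ → ℝ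
  | 0 => fun _ _ _ => 0
  | t + 1 => fun S Q W =>
      (Finset.Iic p.M).inf' Finset.nonempty_Iic
        (fun a => sCost p W a + wStep p (Vit p t) S Q a)

/-- `u_t(S,Q,W,a) = s(W,a) + w_t(S,Q,a)`. -/
noncomputable def uIt (p : MDPParams) (t : ℕ) (S Q W a : ℕ) : ℝ :=
  sCost p W a + wStep p (Vit p t) S Q a

-- auxiliary: wStep is monotone in Q
lemma wStep_mono_Q (p : MDPParams) (V : ℕ → ℕ → ℕ → ℝ)
    (hB : 1 ≤ p.B)
    (hlam : ∀ S ∈ Finset.Icc 1 p.N, 0 ≤ p.lam S)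
    (hsig : ∀ S S', S ≠ S' → 0 ≤ p.sig S S')
    (hmu : 0 ≤ p.mu) (hΔ : 0 ≤ p.Δ) (hr0 : 0 ≤ p.r) (hω : 0 ≤ p.ω)
    (hsmall : ∀ S ∈ Finset.Icc 1 p.N,
      (p.M : ℝ) * p.mu * p.Δ + p.lam S * p.Δ
        + (∑ S' ∈ (Finset.Icc 1 p.N).erase S, p.sig S S') * p.Δ ≤ 1)
    (hV : ∀ S' ∈ Finset.Icc 1 p.N, ∀ Q W, V S' Q W ≤ V S' (Q+1) W)
    (S : ℕ) (hS : S ∈ Finset.Icc 1 p.N) (a : ℕ) (ha : a ≤ p.M) (Q : ℕ) :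
    wStep p V S Q a ≤ wStep p V S (Q+1) a := by
  have hT : (∑ S' ∈ (Finset.Icc 1 p.N).erase S, p.sig S S' * p.Δ * V S' Q a)
      ≤ (∑ S' ∈ (Finset.Icc 1 p.N).erase S, p.sig S S' * p.Δ * V S' (Q+1) a) := by
    refine Finset.sum_le_sum fun S' hS' => ?_
    exact mul_le_mul_of_nonneg_left
      (hV S' (Finset.mem_of_mem_erase hS') Q a)
      (mul_nonneg (hsig S S' (Ne.symm (Finset.mem_erase.1 hS').1)) hΔ)
  have hL0 : 0 ≤ p.lam S * p.Δ := mul_nonneg (hlam S hS) hΔ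
  have hm0 : 0 ≤ (a:ℝ) * p.mu * p.Δ :=
    mul_nonneg (mul_nonneg (Nat.cast_nonneg a) hmu) hΔ
  have hsm := hsmall S hS
  have haM : ((a:ℝ)) * p.mu * p.Δ ≤ (p.M:ℝ) * p.mu * p.Δ :=
    mul_le_mul_of_nonneg_right
      (mul_le_mul_of_nonneg_right (Nat.cast_le.2 ha) hmu) hΔ
  have hcoef : 0 ≤ 1 - (a:ℝ)*p.mu*p.Δ - p.lam S * p.Δ
      - (∑ S' ∈ (Finset.Icc 1 p.N).erase S, p.sig S S') * p.Δ := by linarith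
  have PT : 0 ≤ p.r * ((∑ S' ∈ (Finset.Icc 1 p.N).erase S, p.sig S S' * p.Δ * V S' (Q+1) a)
      - (∑ S' ∈ (Finset.Icc 1 p.N).erase S, p.sig S S' * p.Δ * V S' Q a)) :=
    mul_nonneg hr0 (by linarith)
  have PL1 : 0 ≤ p.r * ((p.lam S * p.Δ) * (V S (Q+2) a - V S (Q+1) a)) :=
    mul_nonneg hr0 (mul_nonneg hL0 (sub_nonneg.2 (hV S hS (Q+1) a)))
  have PL2 : 0 ≤ p.r * ((p.lam S * p.Δ) * (V S (Q+1) a - V S Q a)) :=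
    mul_nonneg hr0 (mul_nonneg hL0 (sub_nonneg.2 (hV S hS Q a)))
  have PM2 : 0 ≤ p.r * (((a:ℝ) * p.mu * p.Δ) * (V S (Q+1) a - V S Q a)) :=
    mul_nonneg hr0 (mul_nonneg hm0 (sub_nonneg.2 (hV S hS Q a)))
  have PD : 0 ≤ p.r * ((1 - (a:ℝ)*p.mu*p.Δ - p.lam S * p.Δ
      - (∑ S' ∈ (Finset.Icc 1 p.N).erase S, p.sig S S') * p.Δ) * (V S (Q+1) a - V S Q a)) :=
    mul_nonneg hr0 (mul_nonneg hcoef (sub_nonneg.2 (hV S hS Q a)))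
  rcases Nat.eq_zero_or_pos Q with rfl | hQ
  · -- Q = 0
    by_cases hc' : 0 + 1 < p.B
    · simp only [wStep, lt_self_iff_false, if_false, if_pos hc',
        if_pos (show 0 < p.B from hB), if_pos (show 0 < 0 + 1 from Nat.succ_pos 0),
        mul_zero, zero_mul, mul_one, sub_zero, Nat.add_sub_cancel, Nat.cast_zero, Nat.cast_succ]
      linarith [PT, PL1, PL2, PM2, PD]
    · simp only [wStep, lt_self_iff_false, if_false, if_neg hc',
        if_pos (show 0 < p.B from hB), if_pos (show 0 < 0 + 1 from Nat.succ_pos 0),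
        mul_zero, zero_mul, mul_one, sub_zero, Nat.add_sub_cancel, Nat.cast_zero, Nat.cast_succ]
      linarith [PT, PL2, PM2, PD]
  · obtain ⟨q, rfl⟩ : ∃ q, Q = q + 1 := ⟨Q - 1, (Nat.succ_pred_eq_of_pos hQ).symm⟩
    have PM1 : 0 ≤ p.r * (((a:ℝ) * p.mu * p.Δ) * (V S (q+1) a - V S q a)) :=
      mul_nonneg hr0 (mul_nonneg hm0 (sub_nonneg.2 (hV S hS q a)))
    by_cases hc : q + 1 < p.B
    · by_cases hc' : q + 1 + 1 < p.B
      · simp only [wStep, if_pos hc, if_pos hc', if_pos (Nat.succ_pos q),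
          if_pos (Nat.succ_pos (q+1)), mul_one, Nat.add_sub_cancel, Nat.cast_succ]
        linarith [PT, PL1, PL2, PM1, PM2, PD]
      · simp only [wStep, if_pos hc, if_neg hc', if_pos (Nat.succ_pos q),
          if_pos (Nat.succ_pos (q+1)), mul_one, mul_zero, zero_mul, sub_zero,
          Nat.add_sub_cancel, Nat.cast_succ]
        linarith [PT, PL2, PM1, PM2, PD]
    · have hc' : ¬ (q + 1 + 1 < p.B) := fun h => hc (by omega)
      simp only [wStep, if_neg hc, if_neg hc', if_pos (Nat.succ_pos q),
        if_pos (Nat.succ_pos (q+1)), mul_one, mul_zero, zero_mul, sub_zero,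
        Nat.add_sub_cancel, Nat.cast_succ]
      linarith [PT, PL2, PM1, PM2, PD]

lemma Vit_mono_Q (p : MDPParams)
    (hB : 1 ≤ p.B)
    (hlam : ∀ S ∈ Finset.Icc 1 p.N, 0 ≤ p.lam S)
    (hsig : ∀ S S', S ≠ S' → 0 ≤ p.sig S S')
    (hmu : 0 ≤ p.mu) (hΔ : 0 ≤ p.Δ) (hr0 : 0 ≤ p.r) (hω : 0 ≤ p.ω)
    (hsmall : ∀ S ∈ Finset.Icc 1 p.N,
      (p.M : ℝ) * p.mu * p.Δ + p.lam S * p.Δ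
        + (∑ S' ∈ (Finset.Icc 1 p.N).erase S, p.sig S S') * p.Δ ≤ 1)
    (t : ℕ) : ∀ S ∈ Finset.Icc 1 p.N, ∀ Q W, Vit p t S Q W ≤ Vit p t S (Q+1) W := by
  induction t with
  | zero => intro S hS Q W; simp [Vit]
  | succ t ih =>
    intro S hS Q W
    simp only [Vit]
    refine Finset.le_inf' Finset.nonempty_Iic _ fun a ha => ?_
    refine le_trans (Finset.inf'_le _ ha) ?_
    exact add_le_add_right (wStep_mono_Q p (Vit p t) hB hlam hsig hmu hΔ hr0 hω hsmall
      ih S hS a (Finset.mem_Iic.1 ha) Q) _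

/-- **Submodularity of `w_t` in `(Q,a)`:** under the induction hypotheses (ii) and
(iii) on `V_t`, for actions `a ≤ b` and `Q < B`,
`w_t(S,Q+1,b) − w_t(S,Q,b) ≤ w_t(S,Q+1,a) − w_t(S,Q,a)`. -/
theorem wStep_submodular_Qa (p : MDPParams)
    (hN : 1 ≤ p.N) (hM : 1 ≤ p.M) (hB : 1 ≤ p.B)
    (hlam : ∀ S ∈ Finset.Icc 1 p.N, 0 ≤ p.lam S)
    (hsig : ∀ S S', S ≠ S' → 0 ≤ p.sig S S')
    (hmu : 0 ≤ p.mu) (hΔ : 0 < p.Δ) (hr0 : 0 ≤ p.r) (hr1 : p.r < 1)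
    (hω : 0 ≤ p.ω) (hEon : 0 ≤ p.Eon) (hEsw : 0 ≤ p.Esw)
    (hsmall : ∀ S ∈ Finset.Icc 1 p.N,
      (p.M : ℝ) * p.mu * p.Δ + p.lam S * p.Δ
        + (∑ S' ∈ (Finset.Icc 1 p.N).erase S, p.sig S S') * p.Δ ≤ 1)
    (t : ℕ)
    (hii : ∀ S ∈ Finset.Icc 1 p.N, ∀ Q1 Q2, Q1 ≤ Q2 → Q2 ≤ p.B →
      ∀ W1 W2, W1 ≤ W2 → W2 ≤ p.M →
        Vit p t S Q2 W1 - Vit p t S Q1 W1 ≥ Vit p t S Q2 W2 - Vit p t S Q1 W2)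
    (hiii : ∀ S ∈ Finset.Icc 1 p.N,
      (∀ Q < p.B, 0 ≤ Vit p t S (Q + 1) 0 - Vit p t S Q 0) ∧
      (∀ Q, Q + 2 ≤ p.B →
        Vit p t S (Q + 1) 0 - Vit p t S Q 0 ≤
          Vit p t S (Q + 2) p.M - Vit p t S (Q + 1) p.M)) :
    ∀ S ∈ Finset.Icc 1 p.N, ∀ a b, a ≤ b → b ≤ p.M → ∀ Q < p.B,
      wStep p (Vit p t) S (Q + 1) b - wStep p (Vit p t) S Q b ≤
        wStep p (Vit p t) S (Q + 1) a - wStep p (Vit p t) S Q a := by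
  intro S hS a b hab hbM Q hQB
  have haM : a ≤ p.M := le_trans hab hbM
  have hΔ' : 0 ≤ p.Δ := hΔ.le
  have hQ1B : Q + 1 ≤ p.B := hQB
  have mono := Vit_mono_Q p hB hlam hsig hmu hΔ' hr0 hω hsmall t
  have hL0 : 0 ≤ p.lam S * p.Δ := mul_nonneg (hlam S hS) hΔ'
  have hm0 : 0 ≤ p.mu * p.Δ := mul_nonneg hmu hΔ'
  have hba : (0:ℝ) ≤ (b:ℝ) - a := sub_nonneg.2 (Nat.cast_le.2 hab)
  have hsm := hsmall S hS
  have haMm : ((a:ℝ)) * p.mu * p.Δ ≤ (p.M:ℝ) * p.mu * p.Δ :=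
    mul_le_mul_of_nonneg_right (mul_le_mul_of_nonneg_right (Nat.cast_le.2 haM) hmu) hΔ'
  have hcoef : 0 ≤ 1 - (a:ℝ)*p.mu*p.Δ - p.lam S * p.Δ
      - (∑ S' ∈ (Finset.Icc 1 p.N).erase S, p.sig S S') * p.Δ := by linarith
  have hT : (∑ S' ∈ (Finset.Icc 1 p.N).erase S, p.sig S S' * p.Δ * Vit p t S' (Q+1) b)
        + (∑ S' ∈ (Finset.Icc 1 p.N).erase S, p.sig S S' * p.Δ * Vit p t S' Q a)
      ≤ (∑ S' ∈ (Finset.Icc 1 p.N).erase S, p.sig S S' * p.Δ * Vit p t S' (Q+1) a)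
        + (∑ S' ∈ (Finset.Icc 1 p.N).erase S, p.sig S S' * p.Δ * Vit p t S' Q b) := by
    rw [← Finset.sum_add_distrib, ← Finset.sum_add_distrib]
    refine Finset.sum_le_sum fun S' hS' => ?_
    have h2 := hii S' (Finset.mem_of_mem_erase hS') Q (Q+1) (Nat.le_succ Q) hQ1B a b hab hbM
    have hσ : 0 ≤ p.sig S S' * p.Δ :=
      mul_nonneg (hsig S S' (Ne.symm (Finset.mem_erase.1 hS').1)) hΔ'
    rw [← mul_add, ← mul_add]
    exact mul_le_mul_of_nonneg_left (by linarith) hσ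
  have PT : 0 ≤ p.r *
      (((∑ S' ∈ (Finset.Icc 1 p.N).erase S, p.sig S S' * p.Δ * Vit p t S' (Q+1) a)
        + (∑ S' ∈ (Finset.Icc 1 p.N).erase S, p.sig S S' * p.Δ * Vit p t S' Q b))
      - ((∑ S' ∈ (Finset.Icc 1 p.N).erase S, p.sig S S' * p.Δ * Vit p t S' (Q+1) b)
        + (∑ S' ∈ (Finset.Icc 1 p.N).erase S, p.sig S S' * p.Δ * Vit p t S' Q a))) :=
    mul_nonneg hr0 (by linarith)
  have hDQ := hii S hS Q (Q+1) (Nat.le_succ Q) hQ1B a b hab hbM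
  have PD : 0 ≤ p.r * ((1 - (a:ℝ)*p.mu*p.Δ - p.lam S*p.Δ
      - (∑ S' ∈ (Finset.Icc 1 p.N).erase S, p.sig S S') * p.Δ)
      * ((Vit p t S (Q+1) a - Vit p t S Q a) - (Vit p t S (Q+1) b - Vit p t S Q b))) :=
    mul_nonneg hr0 (mul_nonneg hcoef (by linarith))
  rcases Nat.eq_zero_or_pos Q with rfl | hQ
  · -- Q = 0
    have PX0 : 0 ≤ p.r * (((b:ℝ) - a) * (p.mu * p.Δ)
        * (Vit p t S (0+1) b - Vit p t S 0 b)) :=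
      mul_nonneg hr0 (mul_nonneg (mul_nonneg hba hm0)
        (sub_nonneg.2 (mono S hS 0 b)))
    by_cases hc' : 0 + 1 < p.B
    · have hD1 := hii S hS (0+1) (0+1+1) (Nat.le_succ _) hc' a b hab hbM
      have PL' : 0 ≤ p.r * ((p.lam S * p.Δ)
          * ((Vit p t S (0+1+1) a - Vit p t S (0+1) a)
            - (Vit p t S (0+1+1) b - Vit p t S (0+1) b))) :=
        mul_nonneg hr0 (mul_nonneg hL0 (by linarith))
      simp only [wStep, lt_self_iff_false, if_false, if_pos hc',
        if_pos (show 0 < p.B from hB), if_pos (show 0 < 0 + 1 from Nat.succ_pos 0),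
        mul_zero, zero_mul, mul_one, sub_zero, Nat.add_sub_cancel]
      linarith [PT, PD, PL', PX0]
    · simp only [wStep, lt_self_iff_false, if_false, if_neg hc',
        if_pos (show 0 < p.B from hB), if_pos (show 0 < 0 + 1 from Nat.succ_pos 0),
        mul_zero, zero_mul, mul_one, sub_zero, Nat.add_sub_cancel]
      linarith [PT, PD, PX0]
  · obtain ⟨q, rfl⟩ : ∃ q, Q = q + 1 := ⟨Q - 1, (Nat.succ_pred_eq_of_pos hQ).symm⟩
    have hq1B : q + 1 ≤ p.B := le_trans (Nat.le_succ _) hQ1B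
    have hDm := hii S hS q (q+1) (Nat.le_succ q) hq1B a b hab hbM
    have PDm : 0 ≤ p.r * (((a:ℝ) * p.mu * p.Δ)
        * ((Vit p t S (q+1) a - Vit p t S q a) - (Vit p t S (q+1) b - Vit p t S q b))) :=
      mul_nonneg hr0 (mul_nonneg (mul_nonneg (mul_nonneg (Nat.cast_nonneg a) hmu) hΔ')
        (by linarith))
    have h1 := hii S hS q (q+1) (Nat.le_succ q) hq1B 0 b (Nat.zero_le b) hbM
    have h2 := (hiii S hS).2 q (by omega)
    have h3 := hii S hS (q+1) (q+2) (Nat.le_succ _) (by omega) b p.M hbM le_rfl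
    have PX : 0 ≤ p.r * (((b:ℝ) - a) * (p.mu * p.Δ)
        * ((Vit p t S (q+1+1) b - Vit p t S (q+1) b)
          - (Vit p t S (q+1) b - Vit p t S q b))) := by
      refine mul_nonneg hr0 (mul_nonneg (mul_nonneg hba hm0) ?_)
      have : q + 2 = q + 1 + 1 := rfl
      rw [this] at h2 h3
      linarith
    by_cases hc' : q + 1 + 1 < p.B
    · have hD1 := hii S hS (q+1+1) (q+1+1+1) (Nat.le_succ _) hc' a b hab hbM
      have PL' : 0 ≤ p.r * ((p.lam S * p.Δ)
          * ((Vit p t S (q+1+1+1) a - Vit p t S (q+1+1) a)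
            - (Vit p t S (q+1+1+1) b - Vit p t S (q+1+1) b))) :=
        mul_nonneg hr0 (mul_nonneg hL0 (by linarith))
      simp only [wStep, if_pos hQB, if_pos hc', if_pos (Nat.succ_pos q),
        if_pos (Nat.succ_pos (q+1)), mul_one, Nat.add_sub_cancel]
      linarith [PT, PD, PL', PDm, PX]
    · simp only [wStep, if_pos hQB, if_neg hc', if_pos (Nat.succ_pos q),
        if_pos (Nat.succ_pos (q+1)), mul_one, mul_zero, zero_mul, sub_zero,
        Nat.add_sub_cancel]
      linarith [PT, PD, PDm, PX]
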